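/- Let F be a field with a valuation v : F → Γ₀ into a linearly ordered commutative group with zero, and let π ∈ F satisfy v(π) > 1. Let g ∈ SL₂(F) have entries g = [[x, y], [z, w]] (so xw − yz = 1). Then g lies in the double coset I · W · I, where W = [[0, π], [−π⁻¹, 0]] (the determinant-1 antidiagonal representative) and I is the Iwahori subgroup, if and only if v(x) < v(π), v(y) = v(π), v(z) < v(π), and v(w) < v(π). -/

import Mathlib

/-- Membership in the Iwahori subgroup of `SL₂` of a valued field: a matrix of determinant `1`,
entries of valuation at most `1`, and lower-left entry of valuation strictly less than `1`
(i.e. a matrix over the valuation ring whose residue is upper triangular). -/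
def IwahoriMem {F Γ₀ : Type*} [Field F] [LinearOrderedCommGroupWithZero Γ₀]
    (v : Valuation F Γ₀) (m : Matrix (Fin 2) (Fin 2) F) : Prop :=
  m.det = 1 ∧ v (m 0 0) ≤ 1 ∧ v (m 0 1) ≤ 1 ∧ v (m 1 0) < 1 ∧ v (m 1 1) ≤ 1

lemma iwahori_diag_val {F Γ₀ : Type*} [Field F] [LinearOrderedCommGroupWithZero Γ₀]
    (v : Valuation F Γ₀) {m : Matrix (Fin 2) (Fin 2) F} (h : IwahoriMem v m) :
    v (m 0 0) = 1 ∧ v (m 1 1) = 1 := by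
  obtain ⟨hdet, ha, hb, hc, hd⟩ := h
  rw [Matrix.det_fin_two] at hdet
  have hbc : v (m 0 1 * m 1 0) < 1 := by
    rw [v.map_mul]
    calc v (m 0 1) * v (m 1 0) ≤ 1 * v (m 1 0) := mul_le_mul_left hb _
    _ = v (m 1 0) := one_mul _
    _ < 1 := hc
  have had : v (m 0 0 * m 1 1) = 1 := by
    have e : m 0 0 * m 1 1 = 1 + m 0 1 * m 1 0 := by linear_combination hdet
    rw [e, v.map_add_eq_of_lt_left (by simpa using hbc), v.map_one]
  rw [v.map_mul] at had
  constructor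
  · refine le_antisymm ha ?_
    calc (1:Γ₀) = v (m 0 0) * v (m 1 1) := had.symm
    _ ≤ v (m 0 0) * 1 := mul_le_mul_right hd _
    _ = v (m 0 0) := mul_one _
  · refine le_antisymm hd ?_
    calc (1:Γ₀) = v (m 0 0) * v (m 1 1) := had.symm
    _ ≤ 1 * v (m 1 1) := mul_le_mul_left ha _
    _ = v (m 1 1) := one_mul _

/-- Let `g = [[x, y], [z, w]] ∈ SL₂(F)` and `v(π) > 1`.  Then
`g ∈ I · [[0, π], [−π⁻¹, 0]] · I` iff `v(x) < v(π)`, `v(y) = v(π)`, `v(z) < v(π)` and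
`v(w) < v(π)`. -/
theorem mem_iwahori_double_coset_antidiag_iff
    {F Γ₀ : Type*} [Field F] [LinearOrderedCommGroupWithZero Γ₀]
    (v : Valuation F Γ₀) (π : F) (hπ : 1 < v π)
    (x y z w : F) (hdet : x * w - y * z = 1) :
    (∃ i₁ i₂ : Matrix (Fin 2) (Fin 2) F, IwahoriMem v i₁ ∧ IwahoriMem v i₂ ∧
        !![x, y; z, w] = i₁ * !![0, π; -π⁻¹, 0] * i₂) ↔
      v x < v π ∧ v y = v π ∧ v z < v π ∧ v w < v π := by
  have hπ0 : (0:Γ₀) < v π := zero_lt_one.trans hπ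
  have hπne : v π ≠ 0 := hπ0.ne'
  have hπF : π ≠ 0 := fun h => by simp [h] at hπ0
  have hinv : v π⁻¹ < 1 := by
    rw [map_inv₀]; exact inv_lt_one_of_one_lt₀ hπ
  constructor
  · rintro ⟨i₁, i₂, h₁, h₂, hg⟩
    obtain ⟨hva, hvd⟩ := iwahori_diag_val v h₁
    obtain ⟨hva', hvd'⟩ := iwahori_diag_val v h₂
    obtain ⟨-, ha, hb, hc, hd⟩ := h₁
    obtain ⟨-, ha', hb', hc', hd'⟩ := h₂
    set a := i₁ 0 0 with hA; set b := i₁ 0 1; set c := i₁ 1 0; set d := i₁ 1 1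
    set a' := i₂ 0 0; set b' := i₂ 0 1; set c' := i₂ 1 0; set d' := i₂ 1 1
    rw [Matrix.eta_fin_two i₁, Matrix.eta_fin_two i₂, Matrix.mul_fin_two, Matrix.mul_fin_two] at hg
    have hX : x = (a * 0 + b * -π⁻¹) * a' + (a * π + b * 0) * c' := congrFun (congrFun hg 0) 0
    have hY : y = (a * 0 + b * -π⁻¹) * b' + (a * π + b * 0) * d' := congrFun (congrFun hg 0) 1
    have hZ : z = (c * 0 + d * -π⁻¹) * a' + (c * π + d * 0) * c' := congrFun (congrFun hg 1) 0
    have hW : w = (c * 0 + d * -π⁻¹) * b' + (c * π + d * 0) * d' := congrFun (congrFun hg 1) 1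
    have hx' : x = -(b * π⁻¹ * a') + a * π * c' := by rw [hX]; ring
    have hy' : y = -(b * π⁻¹ * b') + a * π * d' := by rw [hY]; ring
    have hz' : z = -(d * π⁻¹ * a') + c * π * c' := by rw [hZ]; ring
    have hw' : w = -(d * π⁻¹ * b') + c * π * d' := by rw [hW]; ring
    have hsmall : ∀ u u' : F, v u ≤ 1 → v u' ≤ 1 → v (-(u * π⁻¹ * u')) < v π := by
      intro u u' hu hu'
      rw [v.map_neg, v.map_mul, v.map_mul]
      calc v u * v π⁻¹ * v u' ≤ 1 * v π⁻¹ * 1 :=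
            mul_le_mul' (mul_le_mul' hu le_rfl) hu'
      _ = v π⁻¹ := by rw [one_mul, mul_one]
      _ < 1 := hinv
      _ < v π := hπ
    refine ⟨?_, ?_, ?_, ?_⟩
    · rw [hx']
      refine lt_of_le_of_lt (v.map_add _ _) (max_lt (hsmall _ _ hb ha') ?_)
      rw [v.map_mul, v.map_mul, hva, one_mul]
      calc v π * v c' < v π * 1 := mul_lt_mul_of_pos_left hc' hπ0
      _ = v π := mul_one _
    · rw [hy', v.map_add_eq_of_lt_right, v.map_mul, v.map_mul, hva, hvd', one_mul, mul_one]
      rw [v.map_mul, v.map_mul, hva, hvd', one_mul, mul_one]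
      exact hsmall _ _ hb hb'
    · rw [hz']
      refine lt_of_le_of_lt (v.map_add _ _) (max_lt (hsmall _ _ hd ha') ?_)
      rw [v.map_mul, v.map_mul]
      calc v c * v π * v c' ≤ v c * v π * 1 := mul_le_mul_right hc'.le _
      _ = v π * v c := by rw [mul_one, mul_comm]
      _ < v π * 1 := mul_lt_mul_of_pos_left hc hπ0
      _ = v π := mul_one _
    · rw [hw']
      refine lt_of_le_of_lt (v.map_add _ _) (max_lt (hsmall _ _ hd hb') ?_)
      rw [v.map_mul, v.map_mul]
      calc v c * v π * v d' ≤ v c * v π * 1 := mul_le_mul_right hd' _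
      _ = v π * v c := by rw [mul_one, mul_comm]
      _ < v π * 1 := mul_lt_mul_of_pos_left hc hπ0
      _ = v π := mul_one _
  · rintro ⟨hx, hy, hz, hw⟩
    have hy0 : y ≠ 0 := fun h => by rw [h, v.map_zero] at hy; exact hπne hy.symm
    refine ⟨!![1, 0; w/y, 1], !![π/y, 0; x/π, y/π], ?_, ?_, ?_⟩
    · refine ⟨by simp [Matrix.det_fin_two_of], ?_, ?_, ?_, ?_⟩
      · show v 1 ≤ 1; simp
      · show v 0 ≤ 1; simp
      · show v (w/y) < 1
        rw [v.map_div, hy, div_lt_iff₀ hπ0, one_mul]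
        exact hw
      · show v 1 ≤ 1; simp
    · refine ⟨?_, ?_, ?_, ?_, ?_⟩
      · rw [Matrix.det_fin_two_of]
        field_simp
        ring
      · show v (π/y) ≤ 1
        rw [v.map_div, hy, div_self hπne]
      · show v 0 ≤ 1; simp
      · show v (x/π) < 1
        rw [v.map_div, div_lt_iff₀ hπ0, one_mul]
        exact hx
      · show v (y/π) ≤ 1
        rw [v.map_div, hy, div_self hπne]
    · rw [Matrix.mul_fin_two, Matrix.mul_fin_two]
      ext i j
      fin_cases i <;> fin_cases j
      · show x = (1 * 0 + 0 * -π⁻¹) * (π/y) + (1 * π + 0 * 0) * (x/π)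
        field_simp
        ring
      · show y = (1 * 0 + 0 * -π⁻¹) * 0 + (1 * π + 0 * 0) * (y/π)
        field_simp
        ring
      · show z = (w/y * 0 + 1 * -π⁻¹) * (π/y) + (w/y * π + 1 * 0) * (x/π)
        field_simp
        linear_combination (-(y*π)) * hdet
      · show w = (w/y * 0 + 1 * -π⁻¹) * 0 + (w/y * π + 1 * 0) * (y/π)
        field_simp
        ring
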